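/- There exist four pairwise distinct complex numbers e_0, e_1, e_2, e_3 such that, for the monic quartic f(w) := ∏_{j=0}^{3}(w − e_j), the additive subgroup of ℂ generated by the four reciprocal derivatives 1/f′(e_0), 1/f′(e_1), 1/f′(e_2), 1/f′(e_3) is dense in ℂ. (Hence the case of the branching-set closure equal to all of ℂ is actually realized by polynomial vector fields.) -/

import Mathlib

open Finset

private lemma exists_rho : ∃ r : ℝ, 1.31 ≤ r ∧ r ≤ 1.34 ∧ r ^ 3 = r + 1 := by
  have hc : ContinuousOn (fun x : ℝ => x ^ 3 - x - 1) (Set.Icc 1.31 1.34) := by fun_prop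
  have h := intermediate_value_Icc (by norm_num : (1.31 : ℝ) ≤ 1.34) hc
  have h0 : (0 : ℝ) ∈ Set.Icc ((1.31:ℝ) ^ 3 - 1.31 - 1) ((1.34:ℝ) ^ 3 - 1.34 - 1) := by
    constructor <;> norm_num
  obtain ⟨r, hr, hr0⟩ := h h0
  refine ⟨r, hr.1, hr.2, ?_⟩
  have hr0' : r ^ 3 - r - 1 = 0 := hr0
  linarith

set_option maxHeartbeats 2000000 in
/-- there is a monic quartic `f(w) = ∏ j, (w - e j)` with four pairwise
distinct zeros such that the additive subgroup of `ℂ` generated by the four reciprocal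
derivatives `1/f'(e_j)` is dense in `ℂ` (realizing the fifth case `B = ℂ` of the
branching-set classification). -/
theorem exists_quartic_with_dense_period_group :
    ∃ e : Fin 4 → ℂ, Function.Injective e ∧
      Dense ((AddSubgroup.closure (Set.range fun j : Fin 4 =>
        (deriv (fun w : ℂ => ∏ k, (w - e k)) (e j))⁻¹) : AddSubgroup ℂ) : Set ℂ) := by
  obtain ⟨r, hr1, hr2, hr3⟩ := exists_rho
  have ht2' : (0:ℝ) < 3 * r ^ 2 - 4 := by nlinarith
  obtain ⟨t, ht2, ht0⟩ : ∃ t : ℝ, t ^ 2 = 3 * r ^ 2 - 4 ∧ 0 < t :=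
    ⟨Real.sqrt (3 * r ^ 2 - 4), Real.sq_sqrt ht2'.le, Real.sqrt_pos.mpr ht2'⟩
  have htub : t < 1.2 := by nlinarith
  obtain ⟨β, hβre, hβim⟩ : ∃ β : ℂ, β.re = -(r/2) ∧ β.im = t/2 :=
    ⟨⟨-(r/2), t/2⟩, rfl, rfl⟩
  have hβ2re : (β^2).re = (r^2 - t^2)/4 := by
    rw [pow_two, Complex.mul_re, hβre, hβim]; ring
  have hβ2im : (β^2).im = -(r*t)/2 := by
    rw [pow_two, Complex.mul_im, hβre, hβim]; ring
  have hr3' : (r : ℂ) ^ 3 = (r : ℂ) + 1 := by exact_mod_cast hr3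
  have hq : β ^ 2 + (r:ℂ) * β + ((r:ℂ)^2 - 1) = 0 := by
    have hcast : ((r:ℂ)^2) = ((r^2 : ℝ) : ℂ) := by norm_cast
    rw [hcast]
    apply Complex.ext
    · simp only [Complex.add_re, Complex.sub_re, Complex.mul_re, Complex.ofReal_re,
        Complex.ofReal_im, Complex.one_re, Complex.zero_re, hβ2re, hβre, hβim]
      nlinarith
    · simp only [Complex.add_im, Complex.sub_im, Complex.mul_im, Complex.ofReal_re,
        Complex.ofReal_im, Complex.one_im, Complex.zero_im, hβ2im, hβre, hβim]
      ring
  have hβ : β ^ 3 = β + 1 := by linear_combination (β - (r:ℂ)) * hq + hr3'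
  have hβ0 : β ≠ 0 := by
    intro h
    have := hβim
    rw [h] at this
    simp at this
    linarith
  -- the four roots
  obtain ⟨x, hx_def⟩ : ∃ x : ℂ, x = 1 - β^2 - Complex.I * β := ⟨_, rfl⟩
  obtain ⟨y, hy_def⟩ : ∃ y : ℂ, y = 1 - β^2 + Complex.I := ⟨_, rfl⟩
  refine ⟨![x, y, 1, 0], ?_, ?_⟩
  · -- injectivity
    have him_x : x.im = r*t/2 + r/2 := by
      simp only [hx_def, Complex.sub_im, Complex.one_im, Complex.mul_im, Complex.I_re,
        Complex.I_im, hβ2im, hβre, hβim]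
      ring
    have him_y : y.im = r*t/2 + 1 := by
      simp only [hy_def, Complex.add_im, Complex.sub_im, Complex.one_im, Complex.I_im, hβ2im]
      ring
    have hxy : x ≠ y := by
      intro h
      have := congrArg Complex.im h
      rw [him_x, him_y] at this
      nlinarith
    have hx1 : x ≠ 1 := by
      intro h
      have := congrArg Complex.im h
      rw [him_x] at this
      simp at this
      nlinarith
    have hx0 : x ≠ 0 := by
      intro h
      have := congrArg Complex.im h
      rw [him_x] at this
      simp at this
      nlinarith
    have hy1 : y ≠ 1 := by
      intro h
      have := congrArg Complex.im h
      rw [him_y] at this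
      simp at this
      nlinarith
    have hy0 : y ≠ 0 := by
      intro h
      have := congrArg Complex.im h
      rw [him_y] at this
      simp at this
      nlinarith
    intro i j hij
    fin_cases i <;> fin_cases j <;>
      simp only [Matrix.cons_val_zero, Matrix.cons_val_one, Matrix.head_cons,
        Matrix.cons_val_two, Matrix.tail_cons, Matrix.cons_val_three] at hij <;>
      first
        | rfl
        | exact absurd hij hxy
        | exact absurd hij hx1
        | exact absurd hij hx0
        | exact absurd hij hy1
        | exact absurd hij hy0
        | exact absurd hij (Ne.symm hxy)
        | exact absurd hij (Ne.symm hx1)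
        | exact absurd hij (Ne.symm hx0)
        | exact absurd hij (Ne.symm hy1)
        | exact absurd hij (Ne.symm hy0)
        | exact absurd hij one_ne_zero
        | exact absurd hij (Ne.symm one_ne_zero)
  · -- density
    set e : Fin 4 → ℂ := ![x, y, 1, 0] with he_def
    have he0 : e 0 = x := rfl
    have he1 : e 1 = y := rfl
    have he2 : e 2 = 1 := rfl
    have he3 : e 3 = 0 := rfl
    set f : ℂ → ℂ := fun w : ℂ => ∏ k, (w - e k) with hf_def
    have hD : ∀ w : ℂ, deriv f w =
        ((w - y) + (w - x)) * (w - 1) * (w - 0) + (w - x) * (w - y) * (w - 0)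
          + (w - x) * (w - y) * (w - 1) := by
      intro w
      have h0 : HasDerivAt (fun z : ℂ => z - x) 1 w := (hasDerivAt_id w).sub_const _
      have h1 : HasDerivAt (fun z : ℂ => z - y) 1 w := (hasDerivAt_id w).sub_const _
      have h2 : HasDerivAt (fun z : ℂ => z - 1) 1 w := (hasDerivAt_id w).sub_const _
      have h3 : HasDerivAt (fun z : ℂ => z - 0) 1 w := (hasDerivAt_id w).sub_const _
      have hprod := ((h0.mul h1).mul h2).mul h3
      have hfeq : f = fun z : ℂ => (z - x) * (z - y) * (z - 1) * (z - 0) := by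
        funext z
        show (∏ k, (z - e k)) = _
        rw [Fin.prod_univ_four, he0, he1, he2, he3]
      rw [hfeq, show (fun z : ℂ => (z - x) * (z - y) * (z - 1) * (z - 0)) = ((((fun z : ℂ => z - x) * fun z => z - y) * fun z => z - 1) * fun z => z - 0) from rfl, hprod.deriv]
      simp only [Pi.mul_apply]
      ring
    -- derivative values
    have hDx : deriv f (e 0) = 2 + Complex.I + 3 * β + β ^ 2 := by
      rw [he0, hD]
      rw [hx_def, hy_def]
      linear_combination ((-1:ℂ) * Complex.I * β + (-1:ℂ) * Complex.I * β^2 + (-2:ℂ) * Complex.I^2 + (-2:ℂ) * Complex.I^2 * β + (-1:ℂ) * Complex.I^3) * hβ + ((-2:ℂ) + (-3:ℂ) * β + (-1:ℂ) * β^2 + (-1:ℂ) * Complex.I + (-1:ℂ) * Complex.I * β + (-1:ℂ) * Complex.I * β^2) * Complex.I_sq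
    have hDy : deriv f (e 1) = (1 - Complex.I) + β + (2 + Complex.I) * β ^ 2 := by
      rw [he1, hD]
      rw [hx_def, hy_def]
      linear_combination ((1:ℂ) * Complex.I * β + (1:ℂ) * Complex.I * β^2 + (-2:ℂ) * Complex.I^2) * hβ + ((-1:ℂ) + (-1:ℂ) * β + (-2:ℂ) * β^2 + (1:ℂ) * Complex.I + (1:ℂ) * Complex.I * β) * Complex.I_sq
    have hD1 : deriv f (e 2) = Complex.I + (2 + Complex.I) * β + (1 - Complex.I) * β ^ 2 := by
      rw [he2, hD]
      rw [hx_def, hy_def]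
      linear_combination ((1:ℂ) * β + (1:ℂ) * Complex.I) * hβ + ((-1:ℂ) * β) * Complex.I_sq
    have hDx0 : deriv f (e 0) ≠ 0 := by
      rw [hDx]
      intro h
      have := congrArg Complex.im h
      simp only [Complex.add_im, Complex.mul_im, Complex.I_im, Complex.I_re, hβ2im, hβim,
        Complex.im_ofNat, Complex.re_ofNat, Complex.zero_im] at this
      norm_num at this
      nlinarith
    have hrat1 : deriv f (e 0) = β * deriv f (e 1) := by
      rw [hDx, hDy]
      linear_combination ((-2:ℂ) + (-1:ℂ) * Complex.I) * hβ
    have hrat2 : deriv f (e 0) = β ^ 2 * deriv f (e 2) := by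
      rw [hDx, hD1]
      linear_combination ((-2:ℂ) + (-1:ℂ) * β + (-1:ℂ) * Complex.I + (1:ℂ) * Complex.I * β) * hβ
    have hDy0 : deriv f (e 1) ≠ 0 := by
      intro h; apply hDx0; rw [hrat1, h, mul_zero]
    have hD10 : deriv f (e 2) ≠ 0 := by
      intro h; apply hDx0; rw [hrat2, h, mul_zero]
    obtain ⟨c, hc_def⟩ : ∃ c : ℂ, c = (deriv f (e 0))⁻¹ := ⟨_, rfl⟩
    have hc0 : c ≠ 0 := by rw [hc_def]; exact inv_ne_zero hDx0
    set S : AddSubgroup ℂ := AddSubgroup.closure (Set.range fun j : Fin 4 =>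
      (deriv (fun w : ℂ => ∏ k, (w - e k)) (e j))⁻¹) with hS_def
    have hmem : ∀ j : Fin 4, (deriv f (e j))⁻¹ ∈ S := by
      intro j
      exact AddSubgroup.subset_closure ⟨j, rfl⟩
    clear_value S
    have hg1 : (deriv f (e 1))⁻¹ = c * β := by
      rw [hc_def, hrat1]
      field_simp
    have hg2 : (deriv f (e 2))⁻¹ = c * β ^ 2 := by
      rw [hc_def, hrat2]
      field_simp
    have hpow : ∀ n : ℕ, c * β ^ n ∈ S ∧ c * β ^ (n+1) ∈ S ∧ c * β ^ (n+2) ∈ S := by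
      intro n
      induction n with
      | zero =>
        refine ⟨?_, ?_, ?_⟩
        · have : c * β ^ 0 = (deriv f (e 0))⁻¹ := by rw [hc_def]; ring
          rw [this]; exact hmem 0
        · rw [zero_add, pow_one, ← hg1]; exact hmem 1
        · rw [zero_add, ← hg2]; exact hmem 2
      | succ n ih =>
        refine ⟨ih.2.1, ih.2.2, ?_⟩
        have hkey : c * β ^ (n + 1 + 2) = c * β ^ (n + 1) + c * β ^ n := by
          have h5 : β ^ (n + 1 + 2) = β ^ n * β ^ 3 := by ring
          rw [h5, hβ]; ring
        rw [hkey]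
        exact S.add_mem ih.2.1 ih.1
    clear hc_def hg1 hg2 hmem hrat1 hrat2 hDy0 hD10 hDx hDy hD1 hD hDx0
    -- |β| < 1
    have habs : ‖β‖ < 1 := by
      have h1 : ‖β‖ ^ 2 = r^2/4 + t^2/4 := by
        rw [Complex.sq_norm, Complex.normSq_apply, hβre, hβim]; ring
      nlinarith [norm_nonneg β]
    have hβnorm : ‖β‖ < 1 := by exact habs
    rw [Metric.dense_iff]
    intro z ε hε
    have hcpos : 0 < ‖c‖ := by simpa using hc0
    obtain ⟨n, hn⟩ := exists_pow_lt_of_lt_one (div_pos hε hcpos) hβnorm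
    obtain ⟨u, hu_def⟩ : ∃ u : ℂ, u = c * β ^ n := ⟨_, rfl⟩
    have hu0 : u ≠ 0 := by rw [hu_def]; exact mul_ne_zero hc0 (pow_ne_zero _ hβ0)
    obtain ⟨w, hw_def⟩ : ∃ w : ℂ, w = z / u := ⟨_, rfl⟩
    obtain ⟨q, hq_def⟩ : ∃ q : ℝ, q = w.im / β.im := ⟨_, rfl⟩
    obtain ⟨p, hp_def⟩ : ∃ p : ℝ, p = w.re - q * β.re := ⟨_, rfl⟩
    have hβim0 : β.im ≠ 0 := by rw [hβim]; positivity
    have hw : w = (p : ℂ) + (q : ℂ) * β := by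
      apply Complex.ext
      · simp only [Complex.add_re, Complex.ofReal_re, Complex.mul_re, Complex.ofReal_im,
          zero_mul, sub_zero]
        rw [hp_def]; ring
      · simp only [Complex.add_im, Complex.ofReal_im, Complex.mul_im, Complex.ofReal_re,
          zero_add, zero_mul, add_zero]
        rw [hq_def]; field_simp
    obtain ⟨m, hm_def⟩ : ∃ m : ℤ, m = round p := ⟨_, rfl⟩
    obtain ⟨k, hk_def⟩ : ∃ k : ℤ, k = round q := ⟨_, rfl⟩
    refine ⟨(m • u + k • (u * β) : ℂ), ?_, ?_⟩
    swap
    · apply S.add_mem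
      · apply S.zsmul_mem
        rw [hu_def]
        exact (hpow n).1
      · apply S.zsmul_mem
        have h6 : u * β = c * β ^ (n+1) := by rw [hu_def]; ring
        rw [h6]
        exact (hpow n).2.1
    rw [Metric.mem_ball, dist_comm, Complex.dist_eq]
    have hzs : z - (m • u + k • (u * β)) = u * (((p - m : ℝ) : ℂ) + ((q - k : ℝ) : ℂ) * β) := by
      rw [zsmul_eq_mul, zsmul_eq_mul]
      have hz : z = u * w := by rw [hw_def]; field_simp
      rw [hz, hw]
      push_cast
      ring
    rw [hzs, norm_mul]
    have hb1 : ‖(((p - m : ℝ) : ℂ) + ((q - k : ℝ) : ℂ) * β)‖ ≤ 1 := by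
      have hround1 : |p - (m : ℝ)| ≤ 1/2 := by rw [hm_def]; exact abs_sub_round p
      have hround2 : |q - (k : ℝ)| ≤ 1/2 := by rw [hk_def]; exact abs_sub_round q
      calc ‖(((p - m : ℝ) : ℂ) + ((q - k : ℝ) : ℂ) * β)‖
          ≤ ‖((p - m : ℝ) : ℂ)‖ + ‖(((q - k : ℝ) : ℂ) * β)‖ :=
            norm_add_le _ _
        _ = |p - (m:ℝ)| + |q - (k:ℝ)| * ‖β‖ := by
            rw [norm_mul, Complex.norm_real, Complex.norm_real, Real.norm_eq_abs, Real.norm_eq_abs]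
        _ ≤ 1/2 + 1/2 * 1 := by
            have h3 := norm_nonneg β
            nlinarith
        _ = 1 := by norm_num
    have hu_abs : ‖u‖ = ‖c‖ * ‖β‖ ^ n := by
      rw [hu_def, norm_mul, norm_pow]
    calc ‖u‖ * ‖(((p - m : ℝ) : ℂ) + ((q - k : ℝ) : ℂ) * β)‖
        ≤ ‖u‖ * 1 := mul_le_mul_of_nonneg_left hb1 (norm_nonneg u)
      _ = ‖c‖ * ‖β‖ ^ n := by rw [mul_one, hu_abs]
      _ < ‖c‖ * (ε / ‖c‖) := mul_lt_mul_of_pos_left hn hcpos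
      _ = ε := by
          have habs0 : ‖c‖ ≠ 0 := by
            exact hcpos.ne'
          field_simp
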